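/- Let b1, b2, T be positive integers with b1 ≠ b2 and T − b1 − b2 ≥ (b1·b2)/|b1 − b2| (as a rational inequality). Then (T − max(b1,b2)) / min(b1,b2) ≥ ⌈(T − min(b1,b2)) / max(b1,b2)⌉, where the left side is a rational number and the right side is the ceiling of a rational number. -/
import Mathlib

lemma stmt2_aux (m M T : ℚ) (hm : 0 < m) (hlt : m < M)
    (h : T - m - M ≥ m * M / (M - m)) :
    (T - M) / m ≥ (⌈(T - m) / M⌉ : ℤ) := by
  have hM : 0 < M := hm.trans hlt
  have hd : 0 < M - m := sub_pos.2 hlt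
  have h' : m * M ≤ (T - m - M) * (M - m) := (div_le_iff₀ hd).mp h
  have h1 : (T - m) / M + 1 ≤ (T - M) / m := by
    rw [div_add' _ _ _ hM.ne', div_le_div_iff₀ hM hm]
    nlinarith
  have h2 : (⌈(T - m) / M⌉ : ℚ) < (T - m) / M + 1 := Int.ceil_lt_add_one _
  linarith

/-- Remark 1 (sufficient condition): if `T - b1 - b2 ≥ b1*b2/|b1-b2|` (as rationals),
then `(T - max b1 b2)/min b1 b2 ≥ ⌈(T - min b1 b2)/max b1 b2⌉`. -/
theorem stmt2 (b1 b2 T : ℕ) (hb1 : 0 < b1) (hb2 : 0 < b2) (hT : 0 < T)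
    (hne : b1 ≠ b2)
    (h : (T : ℚ) - b1 - b2 ≥ (b1 * b2 : ℚ) / |(b1 : ℚ) - b2|) :
    ((T : ℚ) - max b1 b2) / min b1 b2 ≥ (⌈((T : ℚ) - min b1 b2) / max b1 b2⌉ : ℤ) := by
  rcases hne.lt_or_gt with hlt | hlt
  · have hmax : max b1 b2 = b2 := max_eq_right hlt.le
    have hmin : min b1 b2 = b1 := min_eq_left hlt.le
    rw [hmax, hmin]
    have habs : |(b1 : ℚ) - b2| = (b2 : ℚ) - b1 := by
      rw [abs_sub_comm, abs_of_pos]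
      exact sub_pos.2 (by exact_mod_cast hlt)
    apply stmt2_aux
    · exact_mod_cast hb1
    · exact_mod_cast hlt
    · rw [habs] at h; linarith
  · have hmax : max b1 b2 = b1 := max_eq_left hlt.le
    have hmin : min b1 b2 = b2 := min_eq_right hlt.le
    rw [hmax, hmin]
    have habs : |(b1 : ℚ) - b2| = (b1 : ℚ) - b2 := by
      rw [abs_of_pos]
      exact sub_pos.2 (by exact_mod_cast hlt)
    apply stmt2_aux
    · exact_mod_cast hb2
    · exact_mod_cast hlt
    · rw [habs, mul_comm (b1 : ℚ) b2] at h; linarith
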